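/- Let k be a field of positive characteristic and g(Z,T) a non-trivial line in k[Z,T] (i.e., k[Z,T]/(g) ≅ k^[1] but k[Z,T] ≠ k[g]^[1]). Then g is not linear with respect to any system of coordinates of k[Z,T]: there is no coordinate system (Z₁,T₁) of k[Z,T] such that g = b₀(Z₁) + b₁(Z₁)T₁ with b₀, b₁ ∈ k[Z₁]. -/

import Mathlib

open MvPolynomial Polynomial

noncomputable section

section Helpers
variable {k : Type*} [Field k]
variable {k : Type*} [Field k]

lemma hCaeval (b : Polynomial k) :
    Polynomial.aeval (Polynomial.C (Polynomial.X : Polynomial k)) b = Polynomial.C b := by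
  have := Polynomial.aeval_algHom_apply
    ((Polynomial.CAlgHom : Polynomial k →ₐ[Polynomial k] Polynomial (Polynomial k)).restrictScalars k)
    (Polynomial.X : Polynomial k) b
  simpa [Polynomial.CAlgHom] using this

-- BAD1
lemma bad1 (e : (Polynomial (Polynomial k) ⧸ Ideal.span {(0 : Polynomial (Polynomial k))})
    ≃ₐ[k] Polynomial k) : False := by
  set P := Polynomial (Polynomial k)
  have hπ : ∀ a ∈ Ideal.span {(0:P)}, (RingHom.id P) a = 0 := by
    intro a ha
    simpa [zero_dvd_iff] using Ideal.mem_span_singleton.mp ha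
  let π : (P ⧸ Ideal.span {(0:P)}) →+* P := Ideal.Quotient.lift _ (RingHom.id P) hπ
  have hπs : Function.Surjective π := fun a => ⟨Ideal.Quotient.mk _ a, by simp [π]⟩
  have hPIR : IsPrincipalIdealRing P :=
    IsPrincipalIdealRing.of_surjective (π.comp (e.symm : Polynomial k →+* _))
      (hπs.comp e.symm.surjective)
  obtain ⟨d, hd⟩ := (hPIR.principal (Ideal.span {Polynomial.C Polynomial.X, Polynomial.X}))
  have hX : (Polynomial.X : P) ∈ Ideal.span {Polynomial.C Polynomial.X, Polynomial.X} :=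
    Ideal.subset_span (by simp)
  have hCX : (Polynomial.C Polynomial.X : P) ∈ Ideal.span {Polynomial.C Polynomial.X, Polynomial.X} :=
    Ideal.subset_span (by simp)
  rw [hd] at hX hCX
  have hdX : d ∣ Polynomial.X := Ideal.mem_span_singleton.mp hX
  have hdCX : d ∣ Polynomial.C Polynomial.X := Ideal.mem_span_singleton.mp hCX
  obtain ⟨w, hw⟩ := hdX
  rcases Polynomial.irreducible_X.isUnit_or_isUnit hw with h | h
  · -- d unit : span = ⊤
    have hd2 : Ideal.span {Polynomial.C Polynomial.X, Polynomial.X} = (⊤ : Ideal P) := by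
      rw [hd]; exact Ideal.span_singleton_eq_top.mpr h
    let ρ : P →+* k := (Polynomial.evalRingHom (0:k)).comp (Polynomial.evalRingHom (0 : Polynomial k))
    have hker : Ideal.span {Polynomial.C Polynomial.X, Polynomial.X} ≤ RingHom.ker ρ := by
      rw [Ideal.span_le]
      rintro z hz
      simp only [Set.mem_insert_iff, Set.mem_singleton_iff] at hz
      rcases hz with rfl | rfl <;> simp [ρ, RingHom.mem_ker]
    rw [hd2] at hker
    have : ρ 1 = 0 := hker (by trivial)
    simp at this
  · -- w unit, then X ∣ d ∣ C X
    have hXd : Polynomial.X ∣ d := by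
      obtain ⟨u, rfl⟩ := h
      exact ⟨↑u⁻¹, by rw [hw, Units.mul_inv_cancel_right]⟩
    have : (Polynomial.X : P) ∣ Polynomial.C Polynomial.X := hXd.trans hdCX
    rw [Polynomial.X_dvd_iff] at this
    simp at this

-- the composite `P →ₐ k[X]` through the quotient
lemma mk_eq_algebraMap {u : Polynomial (Polynomial k)} (c : k) :
    Ideal.Quotient.mk (Ideal.span {u}) (Polynomial.C (Polynomial.C c))
      = @algebraMap k (Polynomial (Polynomial k) ⧸ Ideal.span {u}) _ inferInstance _ c := by
  have h1 : (Polynomial.C (Polynomial.C c) : Polynomial (Polynomial k))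
      = algebraMap k _ c := by
    rw [Polynomial.algebraMap_apply, Polynomial.algebraMap_eq]
  rw [h1]
  exact (Ideal.Quotient.mkₐ k (Ideal.span {u})).commutes c

-- BAD2 : b₁ = 0 case forces deg b₀ = 1
lemma bad2 (b₀ : Polynomial k) (hb₀ : b₀ ≠ 0)
    (e : (Polynomial (Polynomial k) ⧸ Ideal.span {(Polynomial.C b₀ : Polynomial (Polynomial k))})
      ≃ₐ[k] Polynomial k) : b₀.natDegree = 1 := by
  set P := Polynomial (Polynomial k)
  set I : Ideal P := Ideal.span {(Polynomial.C b₀ : P)}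
  set mk := Ideal.Quotient.mk I
  -- exclude degree 0
  have hdeg0 : b₀.natDegree ≠ 0 := by
    intro h0
    have hc := Polynomial.eq_C_of_natDegree_eq_zero h0
    have hcu : IsUnit (Polynomial.C b₀ : P) := by
      rw [Polynomial.isUnit_C]
      rw [hc, Polynomial.isUnit_C]
      exact isUnit_iff_ne_zero.mpr (fun hz => hb₀ (by rw [hc, hz, Polynomial.C_0]))
    have : I = ⊤ := Ideal.span_singleton_eq_top.mpr hcu
    have hsub : Subsingleton (P ⧸ I) := Ideal.Quotient.subsingleton_iff.mpr this
    have : Subsingleton (Polynomial k) := e.surjective.subsingleton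
    exact zero_ne_one (α := Polynomial k) (Subsingleton.elim 0 1)
  -- the image of the inner variable
  set E : P →ₐ[k] Polynomial k := (e : (P ⧸ I) ≃ₐ[k] Polynomial k).toAlgHom.comp
    (Ideal.Quotient.mkₐ k I)
  set ζ : Polynomial k := E (Polynomial.C Polynomial.X)
  have hζ : Polynomial.aeval ζ b₀ = 0 := by
    have h1 : Polynomial.aeval ζ b₀ = E (Polynomial.aeval (Polynomial.C Polynomial.X) b₀) :=
      (Polynomial.aeval_algHom_apply E (Polynomial.C Polynomial.X) b₀)
    rw [h1, hCaeval]
    have : mk (Polynomial.C b₀) = 0 :=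
      Ideal.Quotient.eq_zero_iff_mem.mpr (Ideal.subset_span rfl)
    show e (Ideal.Quotient.mkₐ k I (Polynomial.C b₀)) = 0
    rw [Ideal.Quotient.mkₐ_eq_mk]
    exact (map_eq_zero_iff e e.injective).mpr this
  -- ζ is constant
  have hζdeg : ζ.natDegree = 0 := by
    by_contra hne
    have hcomp : b₀.comp ζ = 0 := by
      rw [← hζ, Polynomial.aeval_def, Polynomial.comp, Polynomial.algebraMap_eq]
    have hl := Polynomial.leadingCoeff_comp hne (p := b₀)
    rw [hcomp, Polynomial.leadingCoeff_zero] at hl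
    have hζ0 : ζ ≠ 0 := fun hz => hne (by rw [hz, Polynomial.natDegree_zero])
    exact (mul_ne_zero (Polynomial.leadingCoeff_ne_zero.mpr hb₀)
      (pow_ne_zero _ (Polynomial.leadingCoeff_ne_zero.mpr hζ0))) hl.symm
  obtain c := ζ.coeff 0
  have hζc : ζ = Polynomial.C (ζ.coeff 0) := Polynomial.eq_C_of_natDegree_eq_zero hζdeg
  -- transfer back
  have hmkeq : mk (Polynomial.C Polynomial.X) = mk (Polynomial.C (Polynomial.C (ζ.coeff 0))) := by
    apply e.injective
    have h2 : e (mk (Polynomial.C Polynomial.X)) = ζ := rfl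
    rw [h2, mk_eq_algebraMap, AlgEquiv.commutes, Polynomial.algebraMap_eq, ← hζc]
  have hdvd : (Polynomial.C b₀ : P) ∣
      Polynomial.C (Polynomial.X - Polynomial.C (ζ.coeff 0)) := by
    rw [map_sub]
    exact Ideal.mem_span_singleton.mp (Ideal.Quotient.eq.mp hmkeq)
  obtain ⟨w, hw⟩ := hdvd
  have hdvd2 : b₀ ∣ Polynomial.X - Polynomial.C (ζ.coeff 0) := by
    refine ⟨Polynomial.eval 0 w, ?_⟩
    have := congrArg (Polynomial.eval (0 : Polynomial k)) hw
    simpa using this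
  have hle := Polynomial.natDegree_le_of_dvd hdvd2 (Polynomial.X_sub_C_ne_zero _)
  rw [Polynomial.natDegree_X_sub_C] at hle
  omega

-- BAD3 : b₁ nonconstant is impossible
lemma bad3 (b₀ b₁ : Polynomial k) (hb₁ : b₁ ≠ 0) (hdb₁ : b₁.natDegree ≠ 0)
    (e : (Polynomial (Polynomial k) ⧸
        Ideal.span {(Polynomial.C b₀ + Polynomial.C b₁ * Polynomial.X : Polynomial (Polynomial k))})
      ≃ₐ[k] Polynomial k) : False := by
  set u : Polynomial (Polynomial k) := Polynomial.C b₀ + Polynomial.C b₁ * Polynomial.X with hu_def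
  set I : Ideal (Polynomial (Polynomial k)) := Ideal.span {u} with hI_def
  set mk := Ideal.Quotient.mk I with hmk_def
  have hucoeff : u.coeff 1 = b₁ := by
    rw [hu_def]
    simp [Polynomial.coeff_add, Polynomial.coeff_C, Polynomial.coeff_C_mul, Polynomial.coeff_X_one]
  have hu0 : u ≠ 0 := fun h => hb₁ (by rw [← hucoeff, h, Polynomial.coeff_zero])
  -- quotient is a domain, so u is prime
  haveI hdom : IsDomain (Polynomial (Polynomial k) ⧸ I) :=
    Function.Injective.isDomain (e : (Polynomial (Polynomial k) ⧸ I) →+* Polynomial k) e.injective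
  have hprime : Prime u :=
    (Ideal.span_singleton_prime hu0).mp ((Ideal.Quotient.isDomain_iff_prime I).mp hdom)
  -- b₀ and b₁ are coprime
  have hcop : IsCoprime b₀ b₁ := by
    letI : DecidableEq (Polynomial k) := Classical.decEq _
    rw [← EuclideanDomain.gcd_isUnit_iff]
    by_contra hng
    have hdu : Polynomial.C (EuclideanDomain.gcd b₀ b₁) ∣ u :=
      dvd_add (_root_.map_dvd Polynomial.C (EuclideanDomain.gcd_dvd_left b₀ b₁))
        (Dvd.dvd.mul_right (_root_.map_dvd Polynomial.C (EuclideanDomain.gcd_dvd_right b₀ b₁)) _)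
    obtain ⟨w, hw⟩ := hdu
    rcases hprime.irreducible.isUnit_or_isUnit hw with h | h
    · exact hng (Polynomial.isUnit_C.mp h)
    · obtain ⟨r, _, hrw⟩ := Polynomial.isUnit_iff.mp h
      have : u.coeff 1 = 0 := by
        rw [hw, ← hrw, ← Polynomial.C_mul, Polynomial.coeff_C]
        simp
      exact hb₁ (by rw [← hucoeff, this])
  obtain ⟨a, b', hab⟩ := hcop
  have hC1 : Polynomial.C a * Polynomial.C b₀ + Polynomial.C b' * Polynomial.C b₁
      = (1 : Polynomial (Polynomial k)) := by
    rw [← Polynomial.C_mul, ← Polynomial.C_mul, ← Polynomial.C_add, hab, Polynomial.C_1]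
  have hmul : (Polynomial.C b₁ : Polynomial (Polynomial k))
        * (Polynomial.C b' - Polynomial.C a * Polynomial.X) - 1
      = u * (-Polynomial.C a) := by
    rw [hu_def]; linear_combination hC1
  have hβ : mk (Polynomial.C b₁) * mk (Polynomial.C b' - Polynomial.C a * Polynomial.X) = 1 := by
    rw [← map_mul, ← map_one mk, hmk_def, Ideal.Quotient.eq]
    exact Ideal.mem_span_singleton.mpr ⟨-Polynomial.C a, hmul⟩
  have hunit : IsUnit (e (mk (Polynomial.C b₁))) :=
    IsUnit.of_mul_eq_one (e (mk (Polynomial.C b' - Polynomial.C a * Polynomial.X)))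
      (by rw [← map_mul, hβ, map_one])
  obtain ⟨c, _, hc⟩ := Polynomial.isUnit_iff.mp hunit
  have hmkeq : mk (Polynomial.C b₁) = mk (Polynomial.C (Polynomial.C c)) := by
    apply e.injective
    rw [← hc]
    show Polynomial.C c = e (mk (Polynomial.C (Polynomial.C c)))
    rw [hmk_def, mk_eq_algebraMap, AlgEquiv.commutes, Polynomial.algebraMap_eq]
  have hdvd : u ∣ Polynomial.C (b₁ - Polynomial.C c) := by
    rw [map_sub]
    exact Ideal.mem_span_singleton.mp (Ideal.Quotient.eq.mp hmkeq)
  have hne : b₁ - Polynomial.C c ≠ 0 := by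
    intro h
    rw [sub_eq_zero] at h
    exact hdb₁ (by rw [h, Polynomial.natDegree_C])
  obtain ⟨w, hw⟩ := hdvd
  have hw0 : w ≠ 0 := by
    rintro rfl
    rw [mul_zero] at hw
    exact hne (Polynomial.C_eq_zero.mp hw)
  have hudeg : u.natDegree = 1 := by
    rw [hu_def, add_comm]
    exact Polynomial.natDegree_linear hb₁
  have hnd := Polynomial.natDegree_mul hu0 hw0
  rw [← hw, Polynomial.natDegree_C, hudeg] at hnd
  omega

end Helpers

-- surjective endomorphism of a Noetherian ring is injective
lemma surj_endo_inj {R : Type*} [CommRing R] [IsNoetherianRing R] (f : R →+* R)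
    (hf : Function.Surjective f) : Function.Injective f := by
  rw [injective_iff_map_eq_zero]
  intro a ha
  have hmono : Monotone (fun n : ℕ => (RingHom.ker (f ^ n) : Submodule R R)) := by
    apply monotone_nat_of_le_succ
    intro n x hx
    have hx' : (f ^ n) x = 0 := hx
    show (f ^ (n + 1)) x = 0
    have h2 : (f ^ (n + 1)) x = f ((f ^ n) x) := by
      simp [RingHom.coe_pow, Function.iterate_succ_apply']
    rw [h2, hx', map_zero]
  obtain ⟨n, hn⟩ := monotone_stabilizes_iff_noetherian.mpr
    (inferInstance : IsNoetherian R R) ⟨_, hmono⟩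
  obtain ⟨b, rfl⟩ := (hf.iterate n : Function.Surjective (f^[n])) a
  have hb : b ∈ RingHom.ker (f ^ (n + 1)) := by
    show (f ^ (n+1)) b = 0
    rw [show ((f ^ (n+1)) b : R) = f (f^[n] b) by
      simp [RingHom.coe_pow, Function.iterate_succ_apply']]
    exact ha
  have hker : b ∈ RingHom.ker (f ^ n) := by
    have h2 : RingHom.ker (f ^ n) = RingHom.ker (f ^ (n+1)) := hn (n+1) (Nat.le_succ n)
    rw [h2]; exact hb
  simpa [RingHom.coe_pow] using hker

-- generating pairs of k[Z,T] give bijective endomorphisms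
lemma pair_bijective {k : Type*} [Field k] (x y : MvPolynomial (Fin 2) k)
    (h : Algebra.adjoin k {x, y} = ⊤) :
    Function.Bijective (MvPolynomial.aeval (R := k) ![x, y] :
      MvPolynomial (Fin 2) k →ₐ[k] MvPolynomial (Fin 2) k) := by
  have hrange : Set.range ![x, y] = {x, y} := by
    ext z; simp [Fin.exists_fin_two, eq_comm, or_comm]
  have hsurj : Function.Surjective (MvPolynomial.aeval (R := k) ![x, y] :
      MvPolynomial (Fin 2) k →ₐ[k] MvPolynomial (Fin 2) k) := by
    rw [← AlgHom.range_eq_top, ← Algebra.adjoin_range_eq_range_aeval, hrange, h]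
  exact ⟨surj_endo_inj _ hsurj, hsurj⟩

lemma adjoin_pair_map {k A B : Type*} [CommSemiring k] [CommSemiring A] [CommSemiring B]
    [Algebra k A] [Algebra k B] (f : A ≃ₐ[k] B) (x y : A)
    (h : Algebra.adjoin k {x, y} = ⊤) : Algebra.adjoin k {f x, f y} = ⊤ := by
  have hmap := congrArg (Subalgebra.map f.toAlgHom) h
  rwa [AlgHom.map_adjoin, Set.image_pair, Algebra.map_top,
    (AlgHom.range_eq_top _).mpr f.surjective] at hmap

/-- Over a field of positive characteristic, a non-trivial line g in k[Z,T] is not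
linear with respect to any system of coordinates of k[Z,T]. -/
theorem nontrivial_line_not_linear {k : Type*} [Field k] (p : ℕ) (hp : p.Prime)
    [CharP k p] (g : MvPolynomial (Fin 2) k)
    (hline : Nonempty ((MvPolynomial (Fin 2) k ⧸ Ideal.span {g}) ≃ₐ[k] Polynomial k))
    (hnontriv : ¬ ∃ h : MvPolynomial (Fin 2) k,
        AlgebraicIndependent k ![g, h] ∧
        Algebra.adjoin k {g, h} = (⊤ : Subalgebra k (MvPolynomial (Fin 2) k))) :
    ¬ ∃ (Z₁ T₁ : MvPolynomial (Fin 2) k) (b₀ b₁ : Polynomial k),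
        Algebra.adjoin k {Z₁, T₁} = (⊤ : Subalgebra k (MvPolynomial (Fin 2) k)) ∧
        g = Polynomial.aeval Z₁ b₀ + Polynomial.aeval Z₁ b₁ * T₁ := by
  rintro ⟨Z₁, T₁, b₀, b₁, htop, hg⟩
  classical
  obtain ⟨e₀⟩ := hline
  -- the coordinate change as an algebra automorphism (T₁ first!)
  have hTZ : Algebra.adjoin k {T₁, Z₁} = ⊤ := by rwa [Set.pair_comm]
  set φ : MvPolynomial (Fin 2) k →ₐ[k] MvPolynomial (Fin 2) k :=
    MvPolynomial.aeval ![T₁, Z₁] with hφ_def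
  have hφbij : Function.Bijective φ := pair_bijective T₁ Z₁ hTZ
  set ψ : MvPolynomial (Fin 2) k ≃ₐ[k] MvPolynomial (Fin 2) k :=
    AlgEquiv.ofBijective φ hφbij with hψ_def
  have hψ0 : ψ (X 0) = T₁ := by
    show φ (X 0) = T₁; rw [hφ_def]; simp
  have hψ1 : ψ (X 1) = Z₁ := by
    show φ (X 1) = Z₁; rw [hφ_def]; simp
  -- the standard identification of k[Z,T] with k[x][t]
  set ε : MvPolynomial (Fin 2) k ≃ₐ[k] Polynomial (Polynomial k) :=
    (MvPolynomial.finSuccEquiv k 1).trans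
      (Polynomial.mapAlgEquiv ((MvPolynomial.finSuccEquiv k 0).trans
        (Polynomial.mapAlgEquiv (MvPolynomial.isEmptyAlgEquiv k (Fin 0))))) with hε_def
  have hεX0 : ε (X 0) = Polynomial.X := by
    rw [hε_def]
    simp [finSuccEquiv_X_zero, Polynomial.mapAlgEquiv]
  have hεX1 : ε (X 1) = Polynomial.C Polynomial.X := by
    have h1 : (1 : Fin 2) = Fin.succ 0 := rfl
    have h2 : MvPolynomial.finSuccEquiv k 1 (X 1) = Polynomial.C (X 0) := by
      rw [h1, finSuccEquiv_X_succ]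
    rw [hε_def]
    simp [h2, Polynomial.mapAlgEquiv, finSuccEquiv_X_zero]
  set u : Polynomial (Polynomial k) := Polynomial.C b₀ + Polynomial.C b₁ * Polynomial.X
    with hu_def
  -- the composed equivalence χ : k[x][t] ≃ k[Z,T] carrying u to g
  set χ : Polynomial (Polynomial k) ≃ₐ[k] MvPolynomial (Fin 2) k := ε.symm.trans ψ with hχ_def
  have hχX : χ Polynomial.X = T₁ := by
    rw [hχ_def]
    show ψ (ε.symm Polynomial.X) = T₁
    rw [show (Polynomial.X : Polynomial (Polynomial k)) = ε (X 0) from hεX0.symm,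
      ε.symm_apply_apply]
    exact hψ0
  have hχCX : χ (Polynomial.C Polynomial.X) = Z₁ := by
    rw [hχ_def]
    show ψ (ε.symm (Polynomial.C Polynomial.X)) = Z₁
    rw [show (Polynomial.C Polynomial.X : Polynomial (Polynomial k)) = ε (X 1) from hεX1.symm,
      ε.symm_apply_apply]
    exact hψ1
  have hχC : ∀ b : Polynomial k, χ (Polynomial.C b) = Polynomial.aeval Z₁ b := by
    intro b
    rw [← hCaeval b]
    have h3 := Polynomial.aeval_algHom_apply χ.toAlgHom (Polynomial.C Polynomial.X) b
    change Polynomial.aeval (χ (Polynomial.C Polynomial.X)) b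
      = χ (Polynomial.aeval (Polynomial.C Polynomial.X) b) at h3
    rw [← h3, hχCX]
  have hχu : χ u = g := by
    rw [hu_def, map_add, map_mul, hχC b₀, hχC b₁, hχX, hg]
  -- transport of the line hypothesis
  have hIJ : Ideal.span {g} = (Ideal.span {u}).map (χ : Polynomial (Polynomial k) →+* _) := by
    rw [Ideal.map_span, Set.image_singleton]
    congr 1
    rw [show ((χ : Polynomial (Polynomial k) →+* MvPolynomial (Fin 2) k) u
      = χ u) from rfl, hχu]
  set e : (Polynomial (Polynomial k) ⧸ Ideal.span {u}) ≃ₐ[k] Polynomial k :=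
    (Ideal.quotientEquivAlg (Ideal.span {u}) (Ideal.span {g}) χ hIJ).trans e₀ with he_def
  -- generators of k[x][t]
  have htopX : Algebra.adjoin k {(X 0 : MvPolynomial (Fin 2) k), X 1} = ⊤ := by
    rw [← MvPolynomial.adjoin_range_X]
    congr 1
    ext z; simp [Fin.exists_fin_two, eq_comm, or_comm]
  have htopP : Algebra.adjoin k
      {(Polynomial.X : Polynomial (Polynomial k)), Polynomial.C Polynomial.X} = ⊤ := by
    have := adjoin_pair_map ε (X 0) (X 1) htopX
    rwa [hεX0, hεX1] at this
  have hAM : ∀ c : k, algebraMap k (Polynomial (Polynomial k)) c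
      = Polynomial.C (Polynomial.C c) := by
    intro c
    rw [Polynomial.algebraMap_apply, Polynomial.algebraMap_eq]
  -- how to conclude from a good complement
  have finish : ∀ v : Polynomial (Polynomial k),
      Algebra.adjoin k {u, v} = ⊤ → False := by
    intro v huv
    apply hnontriv
    have hadj : Algebra.adjoin k {g, χ v} = ⊤ := by
      have h4 := adjoin_pair_map χ u v huv
      rwa [hχu] at h4
    exact ⟨χ v, algebraicIndependent_iff_injective_aeval.mpr
      (pair_bijective g (χ v) hadj).1, hadj⟩
  by_cases hb₁0 : b₁ = 0
  · -- g is a polynomial in Z₁ alone; its degree must be 1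
    have hu' : u = Polynomial.C b₀ := by rw [hu_def, hb₁0]; simp
    rw [hu'] at e
    have hb₀0 : b₀ ≠ 0 := by
      rintro rfl
      rw [Polynomial.C_0] at e
      exact bad1 e
    have hb₀deg : b₀.natDegree = 1 := bad2 b₀ hb₀0 e
    -- complement : the outer variable
    apply finish Polynomial.X
    set a1 : k := b₀.coeff 1 with ha1_def
    set a0 : k := b₀.coeff 0 with ha0_def
    have ha₁ : a1 ≠ 0 := by
      have h9 : a1 = b₀.leadingCoeff := by rw [ha1_def, Polynomial.leadingCoeff, hb₀deg]
      rw [h9]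
      exact Polynomial.leadingCoeff_ne_zero.mpr hb₀0
    have hb₀eq : b₀ = Polynomial.C a1 * Polynomial.X + Polynomial.C a0 :=
      Polynomial.eq_X_add_C_of_natDegree_le_one (le_of_eq hb₀deg)
    rw [eq_top_iff, ← htopP]
    apply Algebra.adjoin_le
    rintro z hz
    simp only [Set.mem_insert_iff, Set.mem_singleton_iff] at hz
    rcases hz with rfl | rfl
    · exact Algebra.subset_adjoin (by simp)
    · -- C X is recovered from u and constants
      have hmem_u : u ∈ Algebra.adjoin k {u, (Polynomial.X : Polynomial (Polynomial k))} :=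
        Algebra.subset_adjoin (by simp)
      have heq : a1⁻¹ • (u - algebraMap k _ a0)
          = (Polynomial.C Polynomial.X : Polynomial (Polynomial k)) := by
        have h5 : u - algebraMap k (Polynomial (Polynomial k)) a0
            = algebraMap k _ a1 * Polynomial.C Polynomial.X := by
          rw [hu', hb₀eq]
          simp only [hAM, map_add, map_mul]
          ring
        rw [h5, ← Algebra.smul_def, smul_smul, inv_mul_cancel₀ ha₁, one_smul]
      rw [← heq]
      exact Subalgebra.smul_mem _ (Subalgebra.sub_mem _ hmem_u
        (Subalgebra.algebraMap_mem _ _)) _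
  · by_cases hdb₁ : b₁.natDegree = 0
    · -- b₁ is a nonzero constant; the inner variable is a complement
      set c0 : k := b₁.coeff 0 with hc0_def
      have hb₁eq : b₁ = Polynomial.C c0 := Polynomial.eq_C_of_natDegree_eq_zero hdb₁
      have hc0 : c0 ≠ 0 := by
        intro h
        exact hb₁0 (by rw [hb₁eq, h, Polynomial.C_0])
      apply finish (Polynomial.C Polynomial.X)
      rw [eq_top_iff, ← htopP]
      apply Algebra.adjoin_le
      rintro z hz
      simp only [Set.mem_insert_iff, Set.mem_singleton_iff] at hz
      rcases hz with rfl | rfl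
      · -- X is recovered
        have hmem_u : u ∈ Algebra.adjoin k {u, (Polynomial.C Polynomial.X :
            Polynomial (Polynomial k))} := Algebra.subset_adjoin (by simp)
        have hmem_Cb₀ : (Polynomial.C b₀ : Polynomial (Polynomial k))
            ∈ Algebra.adjoin k {u, (Polynomial.C Polynomial.X : Polynomial (Polynomial k))} := by
          have h6 : (Polynomial.C b₀ : Polynomial (Polynomial k))
              = Polynomial.aeval (Polynomial.C Polynomial.X) b₀ := (hCaeval b₀).symm
          rw [h6]
          have h7 : Polynomial.aeval (Polynomial.C (Polynomial.X : Polynomial k)) b₀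
              ∈ Algebra.adjoin k {(Polynomial.C Polynomial.X : Polynomial (Polynomial k))} := by
            rw [Algebra.adjoin_singleton_eq_range_aeval]
            exact ⟨b₀, rfl⟩
          exact Algebra.adjoin_mono (by simp) h7
        have heq : c0⁻¹ • (u - Polynomial.C b₀)
            = (Polynomial.X : Polynomial (Polynomial k)) := by
          have h8 : u - Polynomial.C b₀ = algebraMap k _ c0 * Polynomial.X := by
            rw [hu_def, hb₁eq]
            simp only [hAM, map_add, map_mul]
            ring
          rw [h8, ← Algebra.smul_def, smul_smul, inv_mul_cancel₀ hc0, one_smul]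
        rw [← heq]
        exact Subalgebra.smul_mem _ (Subalgebra.sub_mem _ hmem_u hmem_Cb₀) _
      · exact Algebra.subset_adjoin (by simp)
    · exact bad3 b₀ b₁ hb₁0 hdb₁ e
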